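/- With the Parry measure ν on an irreducible aperiodic subshift of finite type as above, if j = J₁...J_n and k = K₁...K_n are admissible words with the same first letter (J₁ = K₁), and for every i ≥ 1 the number of admissible right-extensions of j by i letters is at least the number of admissible right-extensions of k by i letters, then ν(cyl(j)) ≥ ν(cyl(k)). -/

import Mathlib

open Matrix Finset

lemma pow_entry_nonneg {ι : Type*} [Fintype ι] [DecidableEq ι] (A : Matrix ι ι ℝ)
    (hA : ∀ i j, 0 ≤ A i j) : ∀ (k : ℕ) (x y : ι), 0 ≤ (A ^ k) x y := by
  intro k
  induction k with
  | zero => intro x y; by_cases h : x = y <;> simp [Matrix.one_apply, h]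
  | succ k ih =>
      intro x y
      rw [pow_succ, Matrix.mul_apply]
      exact Finset.sum_nonneg fun z _ => mul_nonneg (ih x z) (hA z y)

theorem parry_aux {ι : Type*} [Fintype ι] [DecidableEq ι] [Nonempty ι] (A : Matrix ι ι ℝ)
    (hA : ∀ i j, 0 ≤ A i j)
    (m : ℕ) (hpos : ∀ i j, 0 < (A ^ m) i j)
    (Λ : ℝ) (hΛ : 0 < Λ) (v : ι → ℝ) (hv : ∀ i, 0 < v i)
    (hright : ∀ i, ∑ j, A i j * v j = Λ * v i)
    (x0 y0 : ι)
    (hle : ∀ i : ℕ, ∑ l, (A ^ i) y0 l ≤ ∑ l, (A ^ i) x0 l) :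
    v y0 ≤ v x0 := by
  have hne : (Finset.univ : Finset ι).Nonempty := Finset.univ_nonempty
  have hAp := pow_entry_nonneg A hA
  have hΛk : ∀ k : ℕ, (0:ℝ) < Λ ^ k := fun k => pow_pos hΛ k
  -- iterated eigenvector identity
  have heig : ∀ (k : ℕ) (x : ι), ∑ y, (A ^ k) x y * v y = Λ ^ k * v x := by
    intro k
    induction k with
    | zero => intro x; simp [Matrix.one_apply]
    | succ k ih =>
        intro x
        rw [pow_succ']
        calc ∑ y, (A * A ^ k) x y * v y
            = ∑ y, ∑ z, A x z * ((A ^ k) z y * v y) := by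
              simp [Matrix.mul_apply, Finset.sum_mul, mul_assoc]
          _ = ∑ z, A x z * ∑ y, (A ^ k) z y * v y := by
              rw [Finset.sum_comm]; simp [Finset.mul_sum]
          _ = ∑ z, A x z * (Λ ^ k * v z) := by simp [ih]
          _ = Λ ^ k * ∑ z, A x z * v z := by
              rw [Finset.mul_sum]; apply Finset.sum_congr rfl; intros; ring
          _ = Λ ^ (k + 1) * v x := by rw [hright]; ring
  -- extension counts
  set f : ℕ → ι → ℝ := fun k x => ∑ l, (A ^ k) x l with hf
  have fnn : ∀ k x, 0 ≤ f k x := fun k x => Finset.sum_nonneg fun l _ => hAp k x l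
  have fadd : ∀ (k i : ℕ) (x : ι), f (k + i) x = ∑ y, (A ^ k) x y * f i y := by
    intro k i x
    calc f (k + i) x = ∑ l, ∑ y, (A ^ k) x y * ((A ^ i) y l) := by
          simp [hf, pow_add, Matrix.mul_apply]
      _ = ∑ y, (A ^ k) x y * f i y := by
          rw [Finset.sum_comm]; simp [hf, Finset.mul_sum]
  set g : ℕ → ι → ℝ := fun k x => f k x / (Λ ^ k * v x) with hg
  -- bounds for v
  set Mv : ℝ := Finset.univ.sup' hne v with hMvdef
  set mv : ℝ := Finset.univ.inf' hne v with hmvdef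
  have hMv : ∀ x, v x ≤ Mv := fun x => Finset.le_sup' v (Finset.mem_univ x)
  have hmv : ∀ x, mv ≤ v x := fun x => Finset.inf'_le v (Finset.mem_univ x)
  obtain ⟨z0⟩ := ‹Nonempty ι›
  have hMvpos : 0 < Mv := lt_of_lt_of_le (hv z0) (hMv z0)
  have hmvpos : 0 < mv := by
    obtain ⟨z, _, hz⟩ := Finset.exists_mem_eq_inf' hne v
    rw [hmvdef, hz]; exact hv z
  -- uniform bounds for g
  have glb : ∀ k x, 1 / Mv ≤ g k x := by
    intro k x
    rw [hg]
    rw [le_div_iff₀ (mul_pos (hΛk k) (hv x))]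
    have : 1 / Mv * (Λ ^ k * v x) = (∑ y, (A ^ k) x y * v y) / Mv := by
      rw [heig]; ring
    rw [this, div_le_iff₀ hMvpos, Finset.sum_mul]
    apply Finset.sum_le_sum
    intro l _
    exact mul_le_mul_of_nonneg_left (hMv l) (hAp k x l)
  have gub : ∀ k x, g k x ≤ 1 / mv := by
    intro k x
    rw [hg, div_le_div_iff₀ (mul_pos (hΛk k) (hv x)) hmvpos, one_mul]
    calc f k x * mv = ∑ y, (A ^ k) x y * mv := by rw [hf]; rw [Finset.sum_mul]
      _ ≤ ∑ y, (A ^ k) x y * v y := Finset.sum_le_sum fun l _ =>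
          mul_le_mul_of_nonneg_left (hmv l) (hAp k x l)
      _ = Λ ^ k * v x := heig k x
  -- stochastic weights from A^m
  set w : ι → ι → ℝ := fun x y => (A ^ m) x y * v y / (Λ ^ m * v x) with hw
  have wpos : ∀ x y, 0 < w x y := by
    intro x y
    exact div_pos (mul_pos (hpos x y) (hv y)) (mul_pos (hΛk m) (hv x))
  have wsum : ∀ x, ∑ y, w x y = 1 := by
    intro x
    rw [hw]
    rw [← Finset.sum_div, heig m x, div_self (ne_of_gt (mul_pos (hΛk m) (hv x)))]
  have grec : ∀ (i : ℕ) (x : ι), g (m + i) x = ∑ y, w x y * g i y := by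
    intro i x
    have hterm : ∀ y, w x y * g i y = (A ^ m) x y * f i y / (Λ ^ (m + i) * v x) := by
      intro y
      rw [hw, hg]
      have h1 : v y ≠ 0 := ne_of_gt (hv y)
      have h2 : v x ≠ 0 := ne_of_gt (hv x)
      have h3 : Λ ^ m ≠ 0 := ne_of_gt (hΛk m)
      have h4 : Λ ^ i ≠ 0 := ne_of_gt (hΛk i)
      field_simp
      rw [pow_add]
      ring
    rw [Finset.sum_congr rfl (fun y _ => hterm y), ← Finset.sum_div, ← fadd, hg]
  -- minimal weight
  set δ : ℝ := Finset.univ.inf' hne (fun x => Finset.univ.inf' hne (w x)) with hδ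
  have δle : ∀ x y, δ ≤ w x y := by
    intro x y
    refine le_trans (Finset.inf'_le _ (Finset.mem_univ x)) (Finset.inf'_le _ (Finset.mem_univ y))
  have δpos : 0 < δ := by
    obtain ⟨x, _, hx⟩ := Finset.exists_mem_eq_inf' hne (fun x => Finset.univ.inf' hne (w x))
    obtain ⟨y, _, hy⟩ := Finset.exists_mem_eq_inf' hne (w x)
    rw [hδ, hx, hy]; exact wpos x y
  set ρ : ℝ := 1 - (Fintype.card ι : ℝ) * δ with hρ
  have hρ1 : ρ < 1 := by
    have : (0:ℝ) < (Fintype.card ι : ℝ) * δ := by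
      have : 0 < Fintype.card ι := Fintype.card_pos
      positivity
    rw [hρ]; linarith
  have hρ0 : 0 ≤ ρ := by
    have : (Fintype.card ι : ℝ) * δ ≤ 1 := by
      calc (Fintype.card ι : ℝ) * δ = ∑ _y : ι, δ := by
            rw [Finset.sum_const, Finset.card_univ, nsmul_eq_mul]
        _ ≤ ∑ y, w x0 y := Finset.sum_le_sum fun y _ => δle x0 y
        _ = 1 := wsum x0
    rw [hρ]; linarith
  -- sup and inf of g
  set M : ℕ → ℝ := fun k => Finset.univ.sup' hne (g k) with hM
  set μ : ℕ → ℝ := fun k => Finset.univ.inf' hne (g k) with hμ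
  have gleM : ∀ k x, g k x ≤ M k := fun k x => Finset.le_sup' (g k) (Finset.mem_univ x)
  have μleg : ∀ k x, μ k ≤ g k x := fun k x => Finset.inf'_le (g k) (Finset.mem_univ x)
  have μleM : ∀ k, μ k ≤ M k := fun k => le_trans (μleg k z0) (gleM k z0)
  -- one contraction step
  have contr : ∀ i : ℕ, M (m + i) - μ (m + i) ≤ ρ * (M i - μ i) := by
    intro i
    have upper : ∀ x, g (m + i) x ≤ ρ * M i + δ * ∑ y, g i y := by
      intro x
      rw [grec i x]
      have : ∑ y, w x y * g i y = (∑ y, (w x y - δ) * g i y) + δ * ∑ y, g i y := by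
        rw [Finset.mul_sum, ← Finset.sum_add_distrib]
        exact Finset.sum_congr rfl fun y _ => by ring
      rw [this]
      have hb : ∑ y, (w x y - δ) * g i y ≤ ρ * M i := by
        calc ∑ y, (w x y - δ) * g i y ≤ ∑ y, (w x y - δ) * M i :=
              Finset.sum_le_sum fun y _ =>
                mul_le_mul_of_nonneg_left (gleM i y) (by linarith [δle x y])
          _ = (∑ y, (w x y - δ)) * M i := by rw [Finset.sum_mul]
          _ = ρ * M i := by
              rw [Finset.sum_sub_distrib, wsum x, Finset.sum_const, Finset.card_univ,
                nsmul_eq_mul, hρ]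
      linarith
    have lower : ∀ x, ρ * μ i + δ * ∑ y, g i y ≤ g (m + i) x := by
      intro x
      rw [grec i x]
      have : ∑ y, w x y * g i y = (∑ y, (w x y - δ) * g i y) + δ * ∑ y, g i y := by
        rw [Finset.mul_sum, ← Finset.sum_add_distrib]
        exact Finset.sum_congr rfl fun y _ => by ring
      rw [this]
      have hb : ρ * μ i ≤ ∑ y, (w x y - δ) * g i y := by
        calc ρ * μ i = (∑ y, (w x y - δ)) * μ i := by
              rw [Finset.sum_sub_distrib, wsum x, Finset.sum_const, Finset.card_univ,
                nsmul_eq_mul, hρ]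
          _ = ∑ y, (w x y - δ) * μ i := by rw [Finset.sum_mul]
          _ ≤ ∑ y, (w x y - δ) * g i y :=
              Finset.sum_le_sum fun y _ =>
                mul_le_mul_of_nonneg_left (μleg i y) (by linarith [δle x y])
      linarith
    have h1 : M (m + i) ≤ ρ * M i + δ * ∑ y, g i y :=
      Finset.sup'_le hne _ fun x _ => upper x
    have h2 : ρ * μ i + δ * ∑ y, g i y ≤ μ (m + i) :=
      Finset.le_inf' hne _ fun x _ => lower x
    linarith
  -- iterated oscillation bound
  set C : ℝ := 1 / mv - 1 / Mv with hC
  have hC0 : 0 ≤ C := by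
    have : 1 / Mv ≤ 1 / mv := one_div_le_one_div_of_le hmvpos (le_trans (hmv z0) (hMv z0))
    rw [hC]; linarith
  have oscb : ∀ k : ℕ, M (m * k) - μ (m * k) ≤ ρ ^ k * C := by
    intro k
    induction k with
    | zero =>
        simp only [Nat.mul_zero, pow_zero, one_mul]
        have h1 : M 0 ≤ 1 / mv := Finset.sup'_le hne _ fun x _ => gub 0 x
        have h2 : 1 / Mv ≤ μ 0 := Finset.le_inf' hne _ fun x _ => glb 0 x
        rw [hC]; linarith
    | succ k ih =>
        have : m * (k + 1) = m + m * k := by ring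
        rw [this]
        calc M (m + m * k) - μ (m + m * k) ≤ ρ * (M (m * k) - μ (m * k)) := contr (m * k)
          _ ≤ ρ * (ρ ^ k * C) := mul_le_mul_of_nonneg_left ih hρ0
          _ = ρ ^ (k + 1) * C := by ring
  -- conclude
  refine le_of_forall_pos_le_add ?_
  intro ε hε
  have hB : 0 < v x0 * Mv * C + 1 := by
    have h1 : 0 ≤ v x0 * Mv * C :=
      mul_nonneg (mul_nonneg (hv x0).le hMvpos.le) hC0
    linarith
  obtain ⟨k, hk⟩ := exists_pow_lt_of_lt_one (div_pos hε hB) hρ1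
  set i : ℕ := m * k with hi
  -- the crucial comparison at index i
  have key1 : v y0 * g i y0 ≤ v x0 * g i x0 := by
    have e : ∀ x : ι, v x * g i x = f i x / Λ ^ i := by
      intro x
      rw [hg]
      field_simp [ne_of_gt (hv x), ne_of_gt hΛ]
    rw [e, e]
    gcongr
    exact hle i
  have h2 : g i x0 ≤ g i y0 + (M i - μ i) := by
    have := gleM i x0
    have := μleg i y0
    linarith
  have gy : 1 / Mv ≤ g i y0 := glb i y0
  have gypos : 0 < g i y0 := lt_of_lt_of_le (by positivity) gy
  have osc0 : 0 ≤ M i - μ i := by linarith [μleM i]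
  have oscsmall : M i - μ i ≤ ρ ^ k * C := oscb k
  -- v y0 - v x0 ≤ v x0 * (M i - μ i) / g i y0 ≤ v x0 * Mv * (M i - μ i)
  have step1 : (v y0 - v x0) * g i y0 ≤ v x0 * (M i - μ i) := by nlinarith [hv x0]
  rcases le_or_gt (v y0) (v x0) with hc | hc
  · linarith
  · have hgM : 1 ≤ g i y0 * Mv := by
      rw [div_le_iff₀ hMvpos] at gy
      linarith
    have step2 : v y0 - v x0 ≤ v x0 * Mv * (M i - μ i) := by nlinarith
    have hρk : 0 ≤ ρ ^ k := pow_nonneg hρ0 k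
    have hvM : 0 ≤ v x0 * Mv := mul_nonneg (hv x0).le hMvpos.le
    have step3 : v x0 * Mv * (M i - μ i) ≤ (v x0 * Mv * C + 1) * ρ ^ k := by
      calc v x0 * Mv * (M i - μ i) ≤ v x0 * Mv * (ρ ^ k * C) :=
            mul_le_mul_of_nonneg_left oscsmall hvM
        _ = (v x0 * Mv * C) * ρ ^ k := by ring
        _ ≤ (v x0 * Mv * C + 1) * ρ ^ k := by nlinarith
    have step4 : (v x0 * Mv * C + 1) * ρ ^ k < ε := by
      rw [div_eq_inv_mul] at hk
      calc (v x0 * Mv * C + 1) * ρ ^ k < (v x0 * Mv * C + 1) * ((v x0 * Mv * C + 1)⁻¹ * ε) :=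
            mul_lt_mul_of_pos_left hk hB
        _ = ε := by rw [← mul_assoc, mul_inv_cancel₀ (ne_of_gt hB), one_mul]
    linarith


/-- Parry measure monotonicity: if admissible words `J`, `K` of length `n` share the same
first letter and `J` has at least as many admissible right-extensions of every length as
`K`, then `ν(cyl(J)) ≥ ν(cyl(K))` for the Parry measure `u_{J₁} v_{J_n} / Λ^{n−1}`. -/
theorem eventual_gaussian_stmt4 (s : ℕ) (A : Matrix (Fin s) (Fin s) ℝ)
    (h01 : ∀ i j, A i j = 0 ∨ A i j = 1)
    (hirr : ∀ i j, ∃ m : ℕ, 0 < (A ^ m) i j)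
    (haper : ∃ m₀ : ℕ, ∀ m : ℕ, m₀ ≤ m → ∀ i j, 0 < (A ^ m) i j)
    (Λ : ℝ) (hΛ : 0 < Λ) (u v : Fin s → ℝ)
    (hu : ∀ i, 0 < u i) (hv : ∀ i, 0 < v i)
    (hleft : ∀ j, ∑ i, u i * A i j = Λ * u j)
    (hright : ∀ i, ∑ j, A i j * v j = Λ * v i)
    (hnorm : ∑ i, u i * v i = 1)
    (n : ℕ) (hn : 0 < n) (J K : Fin n → Fin s)
    (hJ : ∀ i : ℕ, ∀ h : i + 1 < n, A (J ⟨i, Nat.lt_of_succ_lt h⟩) (J ⟨i + 1, h⟩) = 1)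
    (hK : ∀ i : ℕ, ∀ h : i + 1 < n, A (K ⟨i, Nat.lt_of_succ_lt h⟩) (K ⟨i + 1, h⟩) = 1)
    (hfirst : J ⟨0, hn⟩ = K ⟨0, hn⟩)
    (hrightext : ∀ i : ℕ,
      ∑ l, (A ^ i) (K ⟨n - 1, Nat.sub_lt hn one_pos⟩) l
        ≤ ∑ l, (A ^ i) (J ⟨n - 1, Nat.sub_lt hn one_pos⟩) l) :
    u (K ⟨0, hn⟩) * v (K ⟨n - 1, Nat.sub_lt hn one_pos⟩) / Λ ^ (n - 1)
      ≤ u (J ⟨0, hn⟩) * v (J ⟨n - 1, Nat.sub_lt hn one_pos⟩) / Λ ^ (n - 1) := by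
  haveI : Nonempty (Fin s) := ⟨J ⟨0, hn⟩⟩
  have hA : ∀ i j, 0 ≤ A i j := by
    intro i j
    rcases h01 i j with h | h <;> rw [h] <;> norm_num
  obtain ⟨m₀, hm₀⟩ := haper
  have hvle : v (K ⟨n - 1, Nat.sub_lt hn one_pos⟩) ≤ v (J ⟨n - 1, Nat.sub_lt hn one_pos⟩) :=
    parry_aux A hA m₀ (hm₀ m₀ le_rfl) Λ hΛ v hv hright _ _ hrightext
  rw [hfirst]
  have h2 : u (K ⟨0, hn⟩) * v (K ⟨n - 1, Nat.sub_lt hn one_pos⟩)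
      ≤ u (K ⟨0, hn⟩) * v (J ⟨n - 1, Nat.sub_lt hn one_pos⟩) :=
    mul_le_mul_of_nonneg_left hvle (hu _).le
  gcongr
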